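/- Let H ∈ ℝ^{d×n}, Y ∈ ℝ^{c×n}, λ > 0, and let P_V be the orthogonal projector onto the column space V of H. Suppose W : ℝ → ℝ^{c×d} is differentiable and satisfies the gradient-flow equation W'(t) = −(W(t)H − Y)Hᵀ − λ W(t) for all t ≥ 0. Then for all t ≥ 0, W(t)(I_d − P_V) = e^{−λ t} · W(0)(I_d − P_V); in particular ‖W(t)(I_d − P_V)‖_F = e^{−λ t} ‖W(0)(I_d − P_V)‖_F. -/

import Mathlib

open Matrix

attribute [local instance] Matrix.frobeniusNormedAddCommGroup Matrix.frobeniusNormedSpace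

/-- The squared Frobenius norm of a real matrix: `‖A‖_F² = ∑ i j, (A i j)²`. -/
noncomputable def frobSq {m n : Type*} [Fintype m] [Fintype n]
    (A : Matrix m n ℝ) : ℝ :=
  ∑ i, ∑ j, (A i j) ^ 2

/-- `P` is the orthogonal projector (symmetric idempotent matrix) onto the
subspace `V ⊆ ℝ^d`, i.e. its column space is `V`. -/
def IsOrthProj {d : ℕ} (P : Matrix (Fin d) (Fin d) ℝ)
    (V : Submodule ℝ (Fin d → ℝ)) : Prop :=
  P.IsSymm ∧ P * P = P ∧ LinearMap.range P.mulVecLin = V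

/-- **Exponential Level-2 attraction.** Along the ridge gradient flow
`W'(t) = −(W(t)H − Y)Hᵀ − λ W(t)`, with `P_V` the orthogonal projector onto the
column space of `H`, one has `W(t)(I − P_V) = e^{−λt} W(0)(I − P_V)`, and in
particular `‖W(t)(I − P_V)‖_F = e^{−λt} ‖W(0)(I − P_V)‖_F`. -/
theorem stmt11 {c d n : ℕ} (H : Matrix (Fin d) (Fin n) ℝ)
    (Y : Matrix (Fin c) (Fin n) ℝ) (lam : ℝ) (hlam : 0 < lam)
    (P : Matrix (Fin d) (Fin d) ℝ)
    (hP : IsOrthProj P (LinearMap.range H.mulVecLin))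
    (W : ℝ → Matrix (Fin c) (Fin d) ℝ)
    (hW : ∀ t : ℝ, 0 ≤ t → HasDerivAt W (-(W t * H - Y) * Hᵀ - lam • W t) t) :
    ∀ t : ℝ, 0 ≤ t →
      W t * ((1 : Matrix (Fin d) (Fin d) ℝ) - P)
        = Real.exp (-lam * t) • (W 0 * ((1 : Matrix (Fin d) (Fin d) ℝ) - P)) ∧
      Real.sqrt (frobSq (W t * ((1 : Matrix (Fin d) (Fin d) ℝ) - P)))
        = Real.exp (-lam * t) *
            Real.sqrt (frobSq (W 0 * ((1 : Matrix (Fin d) (Fin d) ℝ) - P))) := by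
  obtain ⟨hsymm, hidem, hrange⟩ := hP
  set M : Matrix (Fin d) (Fin d) ℝ := (1 : Matrix (Fin d) (Fin d) ℝ) - P with hM
  -- P * H = H
  have hPH : P * H = H := by
    ext i j
    have hmem : H *ᵥ Pi.single j 1 ∈ LinearMap.range P.mulVecLin := by
      rw [hrange]; exact ⟨Pi.single j 1, rfl⟩
    obtain ⟨y, hy⟩ := hmem
    have hfix : P *ᵥ (H *ᵥ Pi.single j 1) = H *ᵥ Pi.single j 1 := by
      simp only [Matrix.mulVecLin_apply] at hy
      rw [← hy, Matrix.mulVec_mulVec, hidem]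
    rw [Matrix.mulVec_mulVec] at hfix
    rw [Matrix.mulVec_single_one, Matrix.mulVec_single_one] at hfix
    have := congrFun hfix i
    simpa using this
  -- Hᵀ * M = 0
  have hHtM : Hᵀ * M = 0 := by
    have hHtP : Hᵀ * P = Hᵀ := by
      have : Hᵀ * Pᵀ = (P * H)ᵀ := (Matrix.transpose_mul P H).symm
      rw [hsymm.eq] at this
      rw [this, hPH]
    rw [hM, Matrix.mul_sub, Matrix.mul_one, hHtP, sub_self]
  -- continuous linear map of right multiplication by M
  let Llin : Matrix (Fin c) (Fin d) ℝ →ₗ[ℝ] Matrix (Fin c) (Fin d) ℝ :=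
    { toFun := fun A => A * M,
      map_add' := fun A B => Matrix.add_mul A B M,
      map_smul' := fun r A => Matrix.smul_mul r A M }
  let L : Matrix (Fin c) (Fin d) ℝ →L[ℝ] Matrix (Fin c) (Fin d) ℝ :=
    LinearMap.toContinuousLinearMap Llin
  -- derivative of Z t = W t * M
  have hZ : ∀ t : ℝ, 0 ≤ t →
      HasDerivAt (fun s => W s * M) ((-lam) • (W t * M)) t := by
    intro t ht
    have h1 := (L.hasFDerivAt).comp_hasDerivAt t (hW t ht)
    have h2 : L (-(W t * H - Y) * Hᵀ - lam • W t) = (-lam) • (W t * M) := by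
      show (-(W t * H - Y) * Hᵀ - lam • W t) * M = (-lam) • (W t * M)
      rw [Matrix.sub_mul, Matrix.mul_assoc, hHtM, Matrix.mul_zero,
        Matrix.smul_mul, zero_sub, neg_smul]
    exact h1.congr_deriv h2
  -- the function g t = exp (lam * t) • (W t * M) has zero derivative on Ici 0
  have hg : ∀ t : ℝ, 0 ≤ t →
      HasDerivAt (fun s => Real.exp (lam * s) • (W s * M)) 0 t := by
    intro t ht
    have hexp : HasDerivAt (fun s : ℝ => Real.exp (lam * s))
        (lam * Real.exp (lam * t)) t := by
      have h0 : HasDerivAt (fun s : ℝ => lam * s) lam t := by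
        simpa using (hasDerivAt_id t).const_mul lam
      have := h0.exp
      simpa [mul_comm] using this
    have := hexp.smul (hZ t ht)
    have heq : Real.exp (lam * t) • ((-lam) • (W t * M))
        + (lam * Real.exp (lam * t)) • (W t * M) = 0 := by
      rw [smul_smul, ← add_smul]
      ring_nf
      simp
    rw [heq] at this
    exact this
  -- g is constant on Ici 0
  have hconst : ∀ t : ℝ, 0 ≤ t →
      Real.exp (lam * t) • (W t * M) = W 0 * M := by
    intro t ht
    have hbound := (convex_Ici (0:ℝ)).norm_image_sub_le_of_norm_hasDerivWithin_le (C := 0)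
      (f := fun s => Real.exp (lam * s) • (W s * M)) (f' := fun _ => 0)
      (fun x hx => (hg x hx).hasDerivWithinAt)
      (fun x _ => by simp) (Set.mem_Ici.mpr le_rfl) (ht)
    have : Real.exp (lam * t) • (W t * M) - Real.exp (lam * 0) • (W 0 * M) = 0 := by
      have h0 : ‖Real.exp (lam * t) • (W t * M) - Real.exp (lam * 0) • (W 0 * M)‖ ≤ 0 := by
        simpa using hbound
      exact norm_le_zero_iff.mp h0
    have := sub_eq_zero.mp this
    simpa using this
  intro t ht
  have hmain : W t * M = Real.exp (-lam * t) • (W 0 * M) := by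
    have h := hconst t ht
    have : Real.exp (-lam * t) • (Real.exp (lam * t) • (W t * M))
        = Real.exp (-lam * t) • (W 0 * M) := by rw [h]
    rw [smul_smul, ← Real.exp_add] at this
    simpa using this
  refine ⟨hmain, ?_⟩
  rw [hmain]
  have hsq : frobSq (Real.exp (-lam * t) • (W 0 * M))
      = Real.exp (-lam * t) ^ 2 * frobSq (W 0 * M) := by
    simp [frobSq, Matrix.smul_apply, mul_pow, Finset.mul_sum]
  rw [hsq, Real.sqrt_mul (sq_nonneg _), Real.sqrt_sq (Real.exp_nonneg _)]
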